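/- Let M be a compact metric space, e : ℕ → M an injective map with dense range, P a Borel probability measure on M, and g : M → ℝ continuous; set v(n) = g(e(n)). Then v has a continuous ν-distribution function if and only if P({g = x}) = 0 for every real number x. -/

import Mathlib

open MeasureTheory Set

lemma aux_dense_open {M : Type*} [MetricSpace M] (e : ℕ → M) (hd : DenseRange e)
    {U : Set M} (hU : IsOpen U) : U ⊆ closure (e '' (e ⁻¹' U)) := by
  rw [Set.image_preimage_eq_inter_range]
  intro m hm
  exact hU.inter_closure ⟨hm, hd m⟩

lemma aux_cdf_cont {μ : Measure ℝ} [IsProbabilityMeasure μ]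
    (h : ∀ x : ℝ, μ {x} = 0) : Continuous (ProbabilityTheory.cdf μ) := by
  set f := ProbabilityTheory.cdf μ with hf
  rw [continuous_iff_continuousAt]
  intro x
  rw [f.mono.continuousAt_iff_leftLim_eq_rightLim]
  have hr : Function.rightLim (⇑f) x = f x := by
    apply rightLim_eq_of_tendsto (h := nhdsGT_neBot x)
    exact (f.right_continuous x).tendsto.mono_left (nhdsWithin_mono _ Set.Ioi_subset_Ici_self)
  rw [hr]
  have hμ : μ {x} = ENNReal.ofReal (f x - Function.leftLim (⇑f) x) := by
    conv_lhs => rw [← ProbabilityTheory.measure_cdf (μ := μ)]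
    exact f.measure_singleton x
  rw [h x] at hμ
  have h1 : f x - Function.leftLim (⇑f) x ≤ 0 := by
    by_contra hc
    push_neg at hc
    rw [eq_comm, ENNReal.ofReal_eq_zero] at hμ
    linarith
  have h2 : Function.leftLim (⇑f) x ≤ f x := f.mono.leftLim_le le_rfl
  linarith

/-- Let `g : M → ℝ` be continuous and `v(n) = g(e(n))`. Then `v` has a continuous
`ν`-distribution function (a continuous `F : ℝ → ℝ` such that for every `x` the set
`{n | v(n) < x}` is `ν*`-measurable with `ν({n | v(n) < x}) = F(x)`) if and only if
`P({g = x}) = 0` for every real `x`. Here `ν*(S) = P(cl(e(S)))`. -/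
theorem stmt6 {M : Type*} [MetricSpace M] [CompactSpace M]
    [MeasurableSpace M] [BorelSpace M]
    (P : Measure M) [IsProbabilityMeasure P]
    (e : ℕ → M) (he : Function.Injective e) (hd : DenseRange e)
    (g : M → ℝ) (hg : Continuous g) :
    (∃ F : ℝ → ℝ, Continuous F ∧ ∀ x : ℝ,
        P (closure (e '' {n : ℕ | g (e n) < x})) +
            P (closure (e '' {n : ℕ | g (e n) < x}ᶜ)) = 1 ∧
          (P (closure (e '' {n : ℕ | g (e n) < x}))).toReal = F x) ↔
      ∀ x : ℝ, P {α : M | g α = x} = 0 := by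
  have hset1 : ∀ x : ℝ, {n : ℕ | g (e n) < x} = e ⁻¹' {m | g m < x} := fun x => rfl
  have hset2 : ∀ x : ℝ, {n : ℕ | g (e n) < x}ᶜ = e ⁻¹' {m | x ≤ g m} := by
    intro x; ext n; simp [not_lt]
  have hopen1 : ∀ x : ℝ, IsOpen {m : M | g m < x} := fun x => isOpen_lt hg continuous_const
  have hopen2 : ∀ x : ℝ, IsOpen {m : M | x < g m} := fun x => isOpen_lt continuous_const hg
  have hclosed1 : ∀ x : ℝ, IsClosed {m : M | g m ≤ x} := fun x => isClosed_le hg continuous_const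
  have hclosed2 : ∀ x : ℝ, IsClosed {m : M | x ≤ g m} := fun x => isClosed_le continuous_const hg
  have hA1 : ∀ x : ℝ, {m : M | g m < x} ⊆ closure (e '' {n : ℕ | g (e n) < x}) := by
    intro x; rw [hset1]; exact aux_dense_open e hd (hopen1 x)
  have hA2 : ∀ x : ℝ, closure (e '' {n : ℕ | g (e n) < x}) ⊆ {m : M | g m ≤ x} := by
    intro x
    apply closure_minimal _ (hclosed1 x)
    rintro m ⟨n, hn, rfl⟩
    exact le_of_lt (show g (e n) < x from hn)
  have hB1 : ∀ x : ℝ, {m : M | x < g m} ⊆ closure (e '' {n : ℕ | g (e n) < x}ᶜ) := by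
    intro x
    rw [hset2]
    refine (aux_dense_open e hd (hopen2 x)).trans (closure_mono (Set.image_mono ?_))
    exact Set.preimage_mono (fun m hm => le_of_lt (show x < g m from hm))
  have hB2 : ∀ x : ℝ, closure (e '' {n : ℕ | g (e n) < x}ᶜ) ⊆ {m : M | x ≤ g m} := by
    intro x
    apply closure_minimal _ (hclosed2 x)
    rw [hset2]
    exact (Set.image_preimage_eq_inter_range ▸ Set.inter_subset_left :
      e '' (e ⁻¹' {m | x ≤ g m}) ⊆ {m | x ≤ g m})
  have hmble : ∀ x : ℝ, MeasurableSet {m : M | g m < x} := fun x => (hopen1 x).measurableSet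
  have hfin : ∀ s : Set M, P s ≠ ⊤ := fun s => (measure_lt_top P s).ne
  -- splitting {g ≤ x} = {g < x} ∪ {g = x}
  have hsplit : ∀ x : ℝ, P {m : M | g m ≤ x} = P {m : M | g m < x} + P {m : M | g m = x} := by
    intro x
    have hdisj : Disjoint {m : M | g m < x} {m : M | g m = x} :=
      Set.disjoint_left.mpr (fun m hm1 hm2 => absurd (show g m = x from hm2)
        (ne_of_lt (show g m < x from hm1)))
    have hms : MeasurableSet {m : M | g m = x} := hg.measurable (measurableSet_singleton x)
    rw [← measure_union hdisj hms]
    congr 1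
    ext m
    simp only [Set.mem_union, Set.mem_setOf_eq]
    exact ⟨fun h => h.lt_or_eq, fun h => h.elim le_of_lt le_of_eq⟩
  constructor
  · rintro ⟨F, hFc, hF⟩ x
    -- F y ≥ P {g ≤ x} for y > x, F y ≤ P {g < x} for y < x
    have hub : ∀ y ∈ Set.Iio x, F y ≤ (P {m : M | g m < x}).toReal := by
      intro y hy
      rw [← (hF y).2]
      apply ENNReal.toReal_le_toReal (hfin _) (hfin _) |>.mpr
      exact measure_mono ((hA2 y).trans
        (fun m hm => lt_of_le_of_lt (show g m ≤ y from hm) hy))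
    have hlb : ∀ y ∈ Set.Ioi x, (P {m : M | g m ≤ x}).toReal ≤ F y := by
      intro y hy
      rw [← (hF y).2]
      apply ENNReal.toReal_le_toReal (hfin _) (hfin _) |>.mpr
      have hsub : {m : M | g m ≤ x} ⊆ {m : M | g m < y} :=
        fun m hm => lt_of_le_of_lt (show g m ≤ x from hm) hy
      exact measure_mono (hsub.trans (hA1 y))
    have hleft : F x ≤ (P {m : M | g m < x}).toReal := by
      have ht : Filter.Tendsto F (nhdsWithin x (Set.Iio x)) (nhds (F x)) :=
        (hFc.continuousAt.tendsto).mono_left nhdsWithin_le_nhds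
      exact le_of_tendsto ht (Filter.eventually_iff_exists_mem.mpr
        ⟨Set.Iio x, self_mem_nhdsWithin, hub⟩)
    have hright : (P {m : M | g m ≤ x}).toReal ≤ F x := by
      have ht : Filter.Tendsto F (nhdsWithin x (Set.Ioi x)) (nhds (F x)) :=
        (hFc.continuousAt.tendsto).mono_left nhdsWithin_le_nhds
      exact ge_of_tendsto ht (Filter.eventually_iff_exists_mem.mpr
        ⟨Set.Ioi x, self_mem_nhdsWithin, hlb⟩)
    have hle : P {m : M | g m ≤ x} ≤ P {m : M | g m < x} :=
      (ENNReal.toReal_le_toReal (hfin _) (hfin _)).mp (le_trans hright hleft)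
    have heq : P {m : M | g m ≤ x} = P {m : M | g m < x} :=
      le_antisymm hle (measure_mono (fun m hm => le_of_lt (show g m < x from hm)))
    have := hsplit x
    rw [heq] at this
    nth_rewrite 1 [show P {m : M | g m < x} = P {m : M | g m < x} + 0 by rw [add_zero]] at this
    exact (ENNReal.add_right_inj (hfin _)).mp this |>.symm
  · intro h
    -- atomless case: measures equal distribution function
    have hPA : ∀ x : ℝ, P (closure (e '' {n : ℕ | g (e n) < x})) = P {m : M | g m < x} := by
      intro x
      refine le_antisymm ?_ (measure_mono (hA1 x))
      calc P (closure (e '' {n : ℕ | g (e n) < x})) ≤ P {m : M | g m ≤ x} :=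
            measure_mono (hA2 x)
        _ = P {m : M | g m < x} := by rw [hsplit x, h x, add_zero]
    have hPB : ∀ x : ℝ, P (closure (e '' {n : ℕ | g (e n) < x}ᶜ)) = P {m : M | x ≤ g m} := by
      intro x
      refine le_antisymm (measure_mono (hB2 x)) ?_
      have hsplit2 : P {m : M | x ≤ g m} = P {m : M | x < g m} + P {m : M | g m = x} := by
        have hdisj : Disjoint {m : M | x < g m} {m : M | g m = x} :=
          Set.disjoint_left.mpr (fun m hm1 hm2 => absurd (show g m = x from hm2)
            (ne_of_gt (show x < g m from hm1)))
        have hms : MeasurableSet {m : M | g m = x} := hg.measurable (measurableSet_singleton x)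
        rw [← measure_union hdisj hms]
        congr 1
        ext m
        simp only [Set.mem_union, Set.mem_setOf_eq]
        exact ⟨fun hm => hm.lt_or_eq.imp id Eq.symm, fun hm => hm.elim le_of_lt (fun h' => le_of_eq h'.symm)⟩
      rw [hsplit2, h x, add_zero]
      exact measure_mono (hB1 x)
    -- the cdf of the pushforward measure
    set μ := P.map g with hμ
    have hmap : ∀ x : ℝ, μ (Set.Iic x) = P {m : M | g m ≤ x} := by
      intro x
      rw [hμ, Measure.map_apply hg.measurable measurableSet_Iic]
      rfl
    have : IsProbabilityMeasure μ := Measure.isProbabilityMeasure_map hg.measurable.aemeasurable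
    have hatom : ∀ x : ℝ, μ {x} = 0 := by
      intro x
      rw [hμ, Measure.map_apply hg.measurable (measurableSet_singleton x)]
      exact h x
    refine ⟨ProbabilityTheory.cdf μ, aux_cdf_cont hatom, fun x => ?_⟩
    constructor
    · have hdisj : Disjoint {m : M | g m < x} {m : M | x ≤ g m} :=
        Set.disjoint_left.mpr (fun m hm1 hm2 => absurd (show x ≤ g m from hm2)
          (not_le.mpr (show g m < x from hm1)))
      rw [hPA x, hPB x, ← measure_union hdisj (hclosed2 x).measurableSet]
      have : {m : M | g m < x} ∪ {m : M | x ≤ g m} = Set.univ := by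
        ext m; simp [lt_or_ge]
      rw [this, measure_univ]
    · rw [hPA x, ProbabilityTheory.cdf_eq_real, measureReal_def, hmap x, hsplit x, h x, add_zero]
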